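/- The wheel with one spoke removed, W_{1,6} − {hub-rim edge to vertex v_1}, admits no unit-distance embedding in the plane: in any planar configuration realizing all remaining edges at unit distance with distinct points, the hub and v_1 are forced to be at distance exactly 1. -/

import Mathlib

lemma rot_step (s a b c d : ℝ) (hs : s^2 = 3)
    (h1 : a^2 + b^2 = 1) (h2 : c^2 + d^2 = 1)
    (h3 : (c - a)^2 + (d - b)^2 = 1) :
    (c = (a - s*b)/2 ∧ d = (s*a + b)/2) ∨
    (c = (a + s*b)/2 ∧ d = (-(s*a) + b)/2) := by
  have hdot : a*c + b*d = 1/2 := by nlinarith [h1, h2, h3]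
  have hcross : (a*d - b*c - s/2) * (a*d - b*c + s/2) = 0 := by nlinarith [h1, h2, hdot, hs]
  rcases mul_eq_zero.1 hcross with h | h
  · have hc : a*d - b*c = s/2 := by linarith
    left
    constructor
    · linear_combination a * hdot - b * hc - c * h1
    · linear_combination b * hdot + a * hc - d * h1
  · have hc : a*d - b*c = -(s/2) := by linarith
    right
    constructor
    · linear_combination a * hdot - b * hc - c * h1
    · linear_combination b * hdot + a * hc - d * h1

lemma circle_final (s a b p q : ℝ) (hs : s^2 = 3)
    (h1 : a^2 + b^2 = 1)
    (r0 : (a - p)^2 + (b - q)^2 = 1)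
    (r5 : (p - (-a + s*b)/2)^2 + (q - (-(s*a) - b)/2)^2 = 1)
    (n0 : ¬ (p = 0 ∧ q = 0)) :
    p^2 + q^2 = 1 := by
  set D := p*a + q*b with hD
  set C := p*b - q*a with hC
  have e1 : p^2 + q^2 = 2*D := by rw [hD]; linear_combination r0 - h1
  have e2 : p^2 + q^2 = -D + s*C := by
    have hprod : s^2*(a^2 + b^2 - 1) = 3*(a^2 + b^2 - 1) := by
      rw [show a^2 + b^2 - 1 = 0 from by linarith]; ring
    rw [hD, hC]
    linear_combination r5 - (1/4 + (1/4)*s^2) * h1 - ((a^2 + b^2)/4) * hs + (1/4)*hprod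
  have e3 : D^2 + C^2 = p^2 + q^2 := by
    rw [hD, hC]; linear_combination (p^2 + q^2) * h1
  have h3D : 3*D = s*C := by linarith
  have e31 : D^2 + C^2 = 2*D := e3.trans e1
  have hfac : C * (2*C - s) = 0 := by
    linear_combination (3/2)*e31 + ((6 - 3*D - s*C)/6)*h3D - (C^2/6)*hs
  rcases mul_eq_zero.1 hfac with h | h
  · exfalso
    have hD0 : D = 0 := by rw [h] at h3D; linarith
    have hpq : p^2 + q^2 = 0 := by rw [e1, hD0]; ring
    exact n0 ⟨by nlinarith [sq_nonneg p, sq_nonneg q],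
              by nlinarith [sq_nonneg p, sq_nonneg q]⟩
  · have hDval : D = 1/2 := by linear_combination (1/3)*h3D + (s/6)*h + (1/6)*hs
    rw [e1, hDval]; ring


lemma wheel_core (s a1 b1 a2 b2 a3 b3 a4 b4 a5 b5 p q : ℝ) (hs : s^2 = 3)
    (h1 : a1^2 + b1^2 = 1) (h2 : a2^2 + b2^2 = 1) (h3 : a3^2 + b3^2 = 1)
    (h4 : a4^2 + b4^2 = 1) (h5 : a5^2 + b5^2 = 1)
    (r1 : (a2 - a1)^2 + (b2 - b1)^2 = 1) (r2 : (a3 - a2)^2 + (b3 - b2)^2 = 1)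
    (r3 : (a4 - a3)^2 + (b4 - b3)^2 = 1) (r4 : (a5 - a4)^2 + (b5 - b4)^2 = 1)
    (r0 : (a1 - p)^2 + (b1 - q)^2 = 1) (r5 : (p - a5)^2 + (q - b5)^2 = 1)
    (n13 : ¬(a1 = a3 ∧ b1 = b3)) (n24 : ¬(a2 = a4 ∧ b2 = b4))
    (n35 : ¬(a3 = a5 ∧ b3 = b5)) (n0 : ¬(p = 0 ∧ q = 0)) :
    p^2 + q^2 = 1 := by
  rcases rot_step s a1 b1 a2 b2 hs h1 h2 r1 with ⟨e2, f2⟩ | ⟨e2, f2⟩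
  · rcases rot_step s a2 b2 a3 b3 hs h2 h3 r2 with ⟨e3, f3⟩ | ⟨e3, f3⟩
    · -- PP : u3 = rot120 u1
      have e3' : a3 = (-a1 - s*b1)/2 := by
        rw [e3, e2, f2]; linear_combination (-(a1/4))*hs
      have f3' : b3 = (s*a1 - b1)/2 := by
        rw [f3, e2, f2]; linear_combination (-(b1/4))*hs
      rcases rot_step s a3 b3 a4 b4 hs h3 h4 r3 with ⟨e4, f4⟩ | ⟨e4, f4⟩
      · -- PPP : u4 = -u1
        have e4' : a4 = -a1 := by rw [e4, e3', f3']; linear_combination (-(a1/4))*hs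
        have f4' : b4 = -b1 := by rw [f4, e3', f3']; linear_combination (-(b1/4))*hs
        rcases rot_step s a4 b4 a5 b5 hs h4 h5 r4 with ⟨e5, f5⟩ | ⟨e5, f5⟩
        · -- PPPP : u5 = rot240 u1
          have e5' : a5 = (-a1 + s*b1)/2 := by rw [e5, e4', f4']; ring
          have f5' : b5 = (-(s*a1) - b1)/2 := by rw [f5, e4', f4']; ring
          rw [e5', f5'] at r5
          exact circle_final s a1 b1 p q hs h1 r0 r5 n0
        · -- PPPN : u5 = u3
          refine absurd ⟨?_, ?_⟩ n35
          · rw [e5, e4', f4', e3']; ring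
          · rw [f5, e4', f4', f3']; ring
      · -- PPN : u4 = u2
        refine absurd ⟨?_, ?_⟩ n24
        · rw [e2, e4, e3', f3']; linear_combination (-(a1/4))*hs
        · rw [f2, f4, e3', f3']; linear_combination (-(b1/4))*hs
    · -- PN : u3 = u1
      refine absurd ⟨?_, ?_⟩ n13
      · rw [e3, e2, f2]; linear_combination (-(a1/4))*hs
      · rw [f3, e2, f2]; linear_combination (-(b1/4))*hs
  · rcases rot_step s a2 b2 a3 b3 hs h2 h3 r2 with ⟨e3, f3⟩ | ⟨e3, f3⟩
    · -- NP : u3 = u1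
      refine absurd ⟨?_, ?_⟩ n13
      · rw [e3, e2, f2]; linear_combination (-(a1/4))*hs
      · rw [f3, e2, f2]; linear_combination (-(b1/4))*hs
    · -- NN : u3 = rot(-120) u1
      have e3' : a3 = (-a1 + s*b1)/2 := by
        rw [e3, e2, f2]; linear_combination (-(a1/4))*hs
      have f3' : b3 = (-(s*a1) - b1)/2 := by
        rw [f3, e2, f2]; linear_combination (-(b1/4))*hs
      rcases rot_step s a3 b3 a4 b4 hs h3 h4 r3 with ⟨e4, f4⟩ | ⟨e4, f4⟩
      · -- NNP : u4 = u2
        refine absurd ⟨?_, ?_⟩ n24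
        · rw [e2, e4, e3', f3']; linear_combination (-(a1/4))*hs
        · rw [f2, f4, e3', f3']; linear_combination (-(b1/4))*hs
      · -- NNN : u4 = -u1
        have e4' : a4 = -a1 := by rw [e4, e3', f3']; linear_combination (-(a1/4))*hs
        have f4' : b4 = -b1 := by rw [f4, e3', f3']; linear_combination (-(b1/4))*hs
        rcases rot_step s a4 b4 a5 b5 hs h4 h5 r4 with ⟨e5, f5⟩ | ⟨e5, f5⟩
        · -- NNNP : u5 = u3
          refine absurd ⟨?_, ?_⟩ n35
          · rw [e5, e4', f4', e3']; ring
          · rw [f5, e4', f4', f3']; ring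
        · -- NNNN : u5 = rot(-240) u1
          have hs' : (-s)^2 = 3 := by rw [neg_pow]; simpa using hs
          have e5' : a5 = (-a1 + (-s)*b1)/2 := by rw [e5, e4', f4']; ring
          have f5' : b5 = (-((-s)*a1) - b1)/2 := by rw [f5, e4', f4']; ring
          rw [e5', f5'] at r5
          exact circle_final (-s) a1 b1 p q hs' h1 r0 r5 n0

/-- The wheel `W_{1,6}` with the spoke to rim vertex `0` removed admits no unit-distance
embedding in the plane: any injective planar configuration realizing all remaining edges
(the other five spokes and the six rim edges) at unit distance forces the hub and rim
vertex `0` to be at distance exactly `1`. -/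
theorem wheel6_minus_spoke_forced (f : Option (Fin 6) → EuclideanSpace ℝ (Fin 2))
    (hinj : Function.Injective f)
    (hspokes : ∀ k : Fin 6, k ≠ 0 → dist (f none) (f (some k)) = 1)
    (hrim : ∀ k : Fin 6, dist (f (some k)) (f (some (k + 1))) = 1) :
    dist (f none) (f (some 0)) = 1 := by
  -- convert distances to coordinates
  have key : ∀ u v : Option (Fin 6),
      dist (f u) (f v) = 1 ↔ (f u 0 - f v 0)^2 + (f u 1 - f v 1)^2 = 1 := by
    intro u v
    rw [EuclideanSpace.dist_eq, Fin.sum_univ_two, Real.dist_eq, Real.dist_eq,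
      sq_abs, sq_abs, Real.sqrt_eq_one]
  have keyne : ∀ u v : Option (Fin 6), u ≠ v →
      ¬(f u 0 = f v 0 ∧ f u 1 = f v 1) := by
    rintro u v huv ⟨h0, h1⟩
    apply huv
    apply hinj
    ext i
    fin_cases i
    · exact h0
    · exact h1
  set H0 := f none 0 with hH0
  set H1 := f none 1 with hH1
  -- spoke equations
  have s1 := (key none (some 1)).1 (hspokes 1 (by decide))
  have s2 := (key none (some 2)).1 (hspokes 2 (by decide))
  have s3 := (key none (some 3)).1 (hspokes 3 (by decide))
  have s4 := (key none (some 4)).1 (hspokes 4 (by decide))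
  have s5 := (key none (some 5)).1 (hspokes 5 (by decide))
  -- rim equations
  have t0 := (key (some 0) (some 1)).1 (by have := hrim 0; rwa [show ((0:Fin 6)+1) = 1 by decide] at this)
  have t1 := (key (some 1) (some 2)).1 (by have := hrim 1; rwa [show ((1:Fin 6)+1) = 2 by decide] at this)
  have t2 := (key (some 2) (some 3)).1 (by have := hrim 2; rwa [show ((2:Fin 6)+1) = 3 by decide] at this)
  have t3 := (key (some 3) (some 4)).1 (by have := hrim 3; rwa [show ((3:Fin 6)+1) = 4 by decide] at this)
  have t4 := (key (some 4) (some 5)).1 (by have := hrim 4; rwa [show ((4:Fin 6)+1) = 5 by decide] at this)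
  have t5 := (key (some 5) (some 0)).1 (by have := hrim 5; rwa [show ((5:Fin 6)+1) = 0 by decide] at this)
  -- distinctness
  have n13 := keyne (some 1) (some 3) (by decide)
  have n24 := keyne (some 2) (some 4) (by decide)
  have n35 := keyne (some 3) (some 5) (by decide)
  have n0h := keyne (some 0) none (by decide)
  -- apply the core algebraic lemma to the hub-translated coordinates
  have hs : (Real.sqrt 3)^2 = 3 := Real.sq_sqrt (by norm_num)
  have core := wheel_core (Real.sqrt 3)
    (f (some 1) 0 - H0) (f (some 1) 1 - H1)
    (f (some 2) 0 - H0) (f (some 2) 1 - H1)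
    (f (some 3) 0 - H0) (f (some 3) 1 - H1)
    (f (some 4) 0 - H0) (f (some 4) 1 - H1)
    (f (some 5) 0 - H0) (f (some 5) 1 - H1)
    (f (some 0) 0 - H0) (f (some 0) 1 - H1) hs
    (by linear_combination s1) (by linear_combination s2) (by linear_combination s3)
    (by linear_combination s4) (by linear_combination s5)
    (by linear_combination t1) (by linear_combination t2)
    (by linear_combination t3) (by linear_combination t4)
    (by linear_combination t0) (by linear_combination t5)
    (by rintro ⟨u, v⟩; exact n13 ⟨by linarith, by linarith⟩)
    (by rintro ⟨u, v⟩; exact n24 ⟨by linarith, by linarith⟩)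
    (by rintro ⟨u, v⟩; exact n35 ⟨by linarith, by linarith⟩)
    (by rintro ⟨u, v⟩; exact n0h ⟨by linarith, by linarith⟩)
  rw [key]
  linear_combination core
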